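/- Let G be a graph and c a proper 3-colouring of G with colours {1,2,3}. If C is a cycle in G all of whose vertices, when traversed in order, are coloured cyclically 1,2,3,1,2,3,...,1,2,3 (so the length of C is divisible by 3), then every vertex of C is fixed with respect to c: for every proper 3-colouring c' reachable from c by a sequence of single-vertex recolourings through proper 3-colourings, c'(v) = c(v) for all v on C. -/
import Mathlib


/-- A colouring is proper if adjacent vertices receive different colours. -/
def ProperColouring {V α : Type*} (G : SimpleGraph V) (c : V → α) : Prop :=
  ∀ u v : V, G.Adj u v → c u ≠ c v

/-- A single-vertex recolouring step: the new colouring is proper and differs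
from the old one on exactly one vertex. -/
def RecolStep {V α : Type*} (G : SimpleGraph V) (c d : V → α) : Prop :=
  ProperColouring G d ∧ ∃ x : V, c x ≠ d x ∧ ∀ v : V, v ≠ x → c v = d v

/-- if a cycle of `G` (of length `3n`) is coloured cyclically
`1,2,3,1,2,3,…` by a proper 3-colouring `c`, then every vertex of the cycle is
fixed: any proper 3-colouring reachable from `c` by single-vertex recolourings
agrees with `c` on the whole cycle. -/
theorem stmt_5 {V : Type*} (G : SimpleGraph V) (c : V → ZMod 3)
    (hc : ProperColouring G c) (n : ℕ) (hn : 0 < n)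
    (w : ZMod (3 * n) → V) (hinj : Function.Injective w)
    (hadj : ∀ i : ZMod (3 * n), G.Adj (w i) (w (i + 1)))
    (hcol : ∀ i : ZMod (3 * n), c (w i) = (i.val : ZMod 3)) :
    ∀ c' : V → ZMod 3, Relation.ReflTransGen (RecolStep G) c c' →
      ∀ i : ZMod (3 * n), c' (w i) = c (w i) := by
  haveI : NeZero (3 * n) := ⟨by omega⟩
  haveI : Fact (1 < 3 * n) := ⟨by omega⟩
  -- the homomorphism ZMod (3n) → ZMod 3
  set f : ZMod (3 * n) →+* ZMod 3 := ZMod.castHom ⟨n, rfl⟩ (ZMod 3) with hf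
  have hfv : ∀ i : ZMod (3 * n), ((i.val : ZMod 3)) = f i := by
    intro i
    simp [hf, ZMod.natCast_val]
  -- strengthened invariant
  have key : ∀ c' : V → ZMod 3, Relation.ReflTransGen (RecolStep G) c c' →
      ∀ i : ZMod (3 * n), c' (w i) = f i := by
    intro c' h
    induction h with
    | refl => intro i; rw [hcol i, hfv]
    | tail _ hstep ih =>
      rename_i b d hbd
      intro i
      obtain ⟨hd, x, hx, hother⟩ := hstep
      by_cases hwx : w i = x
      · exfalso
        have h1 : i + 1 ≠ i := by
          intro h
          have : (1 : ZMod (3 * n)) = 0 := by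
            have := add_right_cancel (a := (1 : ZMod (3*n))) (b := i) (c := 0)
            simpa [add_comm] using congrArg (· - i) h
          exact one_ne_zero this
        have h2 : i - 1 ≠ i := by
          intro h
          have : (i - 1) + 1 = i + 1 := by rw [h]
          simp only [sub_add_cancel] at this
          exact h1 this.symm
        have hw1 : w (i + 1) ≠ x := fun h => h1 (hinj (h.trans hwx.symm))
        have hw2 : w (i - 1) ≠ x := fun h => h2 (hinj (h.trans hwx.symm))
        have e1 : d (w (i + 1)) = f i + 1 := by
          rw [← hother _ hw1, ih (i + 1)]; simp
        have e2 : d (w (i - 1)) = f i - 1 := by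
          rw [← hother _ hw2, ih (i - 1)]; simp
        have a1 : d (w i) ≠ d (w (i + 1)) := hd _ _ (hadj i)
        have a2 : d (w (i - 1)) ≠ d (w i) := by
          have := hd _ _ (hadj (i - 1))
          simpa [sub_add_cancel] using this
        have a0 : d (w i) ≠ f i := by
          rw [← ih i]
          intro h
          rw [hwx] at h
          exact hx h.symm
        rw [e1] at a1
        rw [e2] at a2
        revert a0 a1 a2
        generalize d (w i) = b
        generalize f i = a
        revert a b
        decide
      · rw [← hother _ hwx, ih i]
  intro c' h i
  rw [key c' h i, hcol i, hfv]
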